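/- arXiv:1110.4669 — 2 statements merged into one kernel-verified Lean document; each statement's English description precedes it below -/
import Mathlib

section
/- For all λ > 0, ν > 0 with κ = 2λ/ν², every ρ ∈ ℝ, every strictly positive function û : ℝ → (0,∞), all Δ₁ > 0, Δ₂ > 0 and all x₁, x₂, x ∈ ℝ, the bridge density of the Doob h-transform p_X^{(ρ)}(t; x₀, x) = e^{−ρt}(û(x)/û(x₀)) p_X(t; x₀, x) of the Ornstein–Uhlenbeck density is the normal density: p_X^{(ρ)}(Δ₁; x₁, x) · p_X^{(ρ)}(Δ₂; x, x₂) / p_X^{(ρ)}(Δ₁+Δ₂; x₁, x₂) = (1/√(2πb²)) · exp(−(x−μ)²/(2b²)), where μ = [x₁ e^{λΔ₁}(e^{2λΔ₂} − 1) + x₂ e^{λΔ₂}(e^{2λΔ₁} − 1)] / (e^{2λ(Δ₁+Δ₂)} − 1) and b² = (e^{2λΔ₁} − 1)(e^{2λΔ₂} − 1) / (κ(e^{2λ(Δ₁+Δ₂)} − 1)). -/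
open MeasureTheory Real

/-- The Ornstein–Uhlenbeck transition probability density with `κ = 2λ/ν²`. -/
noncomputable def ouDensity (lam nu t x0 x : ℝ) : ℝ :=
  Real.sqrt ((2 * lam / nu ^ 2) / (2 * Real.pi * (1 - Real.exp (-2 * lam * t)))) *
    Real.exp (-((2 * lam / nu ^ 2) * (x - x0 * Real.exp (-lam * t)) ^ 2) /
      (2 * (1 - Real.exp (-2 * lam * t))))

/-- The Doob h-transformed kernel `p^{(ρ)}(t; x₀, x) = e^{−ρt} (û(x)/û(x₀)) p(t; x₀, x)`. -/
noncomputable def doobKernel (p : ℝ → ℝ → ℝ → ℝ) (ρ : ℝ) (u : ℝ → ℝ)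
    (t x0 x : ℝ) : ℝ :=
  Real.exp (-ρ * t) * (u x / u x0) * p t x0 x

/-- the bridge density of the Doob h-transform of the Ornstein–Uhlenbeck
transition density is the normal density with mean `μ` and variance `b²` of Eq. (11). -/
theorem doob_ou_bridge_density_normal (lam nu : ℝ) (hlam : 0 < lam) (hnu : 0 < nu)
    (ρ : ℝ) (u : ℝ → ℝ) (hu : ∀ x, 0 < u x)
    (Δ1 Δ2 : ℝ) (h1 : 0 < Δ1) (h2 : 0 < Δ2) (x1 x2 x : ℝ) :
    let κ := 2 * lam / nu ^ 2
    let μ := (x1 * Real.exp (lam * Δ1) * (Real.exp (2 * lam * Δ2) - 1)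
        + x2 * Real.exp (lam * Δ2) * (Real.exp (2 * lam * Δ1) - 1)) /
        (Real.exp (2 * lam * (Δ1 + Δ2)) - 1)
    let b2 := (Real.exp (2 * lam * Δ1) - 1) * (Real.exp (2 * lam * Δ2) - 1) /
        (κ * (Real.exp (2 * lam * (Δ1 + Δ2)) - 1))
    doobKernel (ouDensity lam nu) ρ u Δ1 x1 x * doobKernel (ouDensity lam nu) ρ u Δ2 x x2 /
        doobKernel (ouDensity lam nu) ρ u (Δ1 + Δ2) x1 x2
      = (1 / Real.sqrt (2 * Real.pi * b2)) * Real.exp (-(x - μ) ^ 2 / (2 * b2)) := by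
  intro κ μ b2
  have hπ := Real.pi_pos
  have hκ : 0 < κ := by unfold κ; positivity
  have hApos : ∀ t : ℝ, 0 < t → 0 < 1 - Real.exp (-2*lam*t) := by
    intro t ht
    have : Real.exp (-2*lam*t) < 1 := Real.exp_lt_one_iff.2 (by nlinarith)
    linarith
  have ha1 := hApos Δ1 h1
  have ha2 := hApos Δ2 h2
  have ha12 := hApos (Δ1+Δ2) (by linarith)
  have hg1 : 0 < Real.exp (2*lam*Δ1) - 1 := by
    have := Real.one_lt_exp_iff.2 (show (0:ℝ) < 2*lam*Δ1 by positivity); linarith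
  have hg2 : 0 < Real.exp (2*lam*Δ2) - 1 := by
    have := Real.one_lt_exp_iff.2 (show (0:ℝ) < 2*lam*Δ2 by positivity); linarith
  have hg12 : 0 < Real.exp (2*lam*(Δ1+Δ2)) - 1 := by
    have := Real.one_lt_exp_iff.2 (show (0:ℝ) < 2*lam*(Δ1+Δ2) by positivity); linarith
  have hb2 : 0 < b2 := by
    unfold b2
    exact div_pos (mul_pos hg1 hg2) (mul_pos hκ hg12)
  have hNpos : ∀ t : ℝ, 0 < t → ∀ y0 y : ℝ, 0 < ouDensity lam nu t y0 y := by
    intro t ht y0 y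
    unfold ouDensity
    have h := hApos t ht
    have harg : 0 < (2*lam/nu^2) / (2*Real.pi*(1 - Real.exp (-2*lam*t))) := by positivity
    exact mul_pos (Real.sqrt_pos.2 harg) (Real.exp_pos _)
  have key : doobKernel (ouDensity lam nu) ρ u Δ1 x1 x * doobKernel (ouDensity lam nu) ρ u Δ2 x x2 /
        doobKernel (ouDensity lam nu) ρ u (Δ1 + Δ2) x1 x2
      = ouDensity lam nu Δ1 x1 x * ouDensity lam nu Δ2 x x2 /
        ouDensity lam nu (Δ1+Δ2) x1 x2 := by
    unfold doobKernel
    rw [show -ρ*(Δ1+Δ2) = (-ρ*Δ1) + (-ρ*Δ2) by ring, Real.exp_add]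
    have hu1 := (hu x1).ne'
    have hu2 := (hu x2).ne'
    have hux := (hu x).ne'
    have hN := (hNpos (Δ1+Δ2) (by linarith) x1 x2).ne'
    have he1 := (Real.exp_pos (-ρ*Δ1)).ne'
    have he2 := (Real.exp_pos (-ρ*Δ2)).ne'
    field_simp
  rw [key]
  unfold ouDensity
  have rearrange : ∀ s1 e1 s2 e2 s12 e12 : ℝ, s12 ≠ 0 → e12 ≠ 0 →
      (s1*e1)*(s2*e2)/(s12*e12) = (s1*s2/s12)*(e1*e2/e12) := by
    intros s1 e1 s2 e2 s12 e12 hs he; field_simp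
  have hc12 : 0 < (2*lam/nu^2) / (2*Real.pi*(1 - Real.exp (-2*lam*(Δ1+Δ2)))) := by positivity
  rw [rearrange _ _ _ _ _ _ (Real.sqrt_pos.2 hc12).ne' (Real.exp_pos _).ne']
  have hc1 : 0 ≤ (2*lam/nu^2) / (2*Real.pi*(1 - Real.exp (-2*lam*Δ1))) := by positivity
  have Spart : Real.sqrt ((2*lam/nu^2) / (2*Real.pi*(1 - Real.exp (-2*lam*Δ1)))) *
      Real.sqrt ((2*lam/nu^2) / (2*Real.pi*(1 - Real.exp (-2*lam*Δ2)))) /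
      Real.sqrt ((2*lam/nu^2) / (2*Real.pi*(1 - Real.exp (-2*lam*(Δ1+Δ2)))))
      = 1 / Real.sqrt (2*Real.pi*b2) := by
    rw [← Real.sqrt_mul hc1, ← Real.sqrt_div (by positivity), one_div, ← Real.sqrt_inv]
    congr 1
    unfold b2 κ
    rw [show -2*lam*Δ1 = -(2*lam*Δ1) by ring, show -2*lam*Δ2 = -(2*lam*Δ2) by ring,
      show -2*lam*(Δ1+Δ2) = -(2*lam*(Δ1+Δ2)) by ring, Real.exp_neg, Real.exp_neg,
      Real.exp_neg, show 2*lam*(Δ1+Δ2) = 2*lam*Δ1 + 2*lam*Δ2 by ring, Real.exp_add]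
    have hP := (Real.exp_pos (2*lam*Δ1)).ne'
    have hQ := (Real.exp_pos (2*lam*Δ2)).ne'
    have hP1 : Real.exp (2*lam*Δ1) - 1 ≠ 0 := hg1.ne'
    have hQ1 : Real.exp (2*lam*Δ2) - 1 ≠ 0 := hg2.ne'
    have hPQ1 : Real.exp (2*lam*Δ1) * Real.exp (2*lam*Δ2) - 1 ≠ 0 := by
      rw [← Real.exp_add, show 2*lam*Δ1 + 2*lam*Δ2 = 2*lam*(Δ1+Δ2) by ring]; exact hg12.ne'
    field_simp
  rw [Spart]
  congr 1
  rw [← Real.exp_add, ← Real.exp_sub]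
  congr 1
  unfold μ b2 κ
  rw [show -2*lam*Δ1 = -(lam*Δ1) + -(lam*Δ1) by ring, show -2*lam*Δ2 = -(lam*Δ2) + -(lam*Δ2) by ring,
    show -2*lam*(Δ1+Δ2) = -(lam*Δ1 + lam*Δ2) + -(lam*Δ1 + lam*Δ2) by ring,
    show -lam*Δ1 = -(lam*Δ1) by ring, show -lam*Δ2 = -(lam*Δ2) by ring,
    show -lam*(Δ1+Δ2) = -(lam*Δ1 + lam*Δ2) by ring,
    show 2*lam*Δ1 = lam*Δ1 + lam*Δ1 by ring, show 2*lam*Δ2 = lam*Δ2 + lam*Δ2 by ring,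
    show 2*lam*(Δ1+Δ2) = (lam*Δ1 + lam*Δ2) + (lam*Δ1 + lam*Δ2) by ring]
  simp only [Real.exp_add, Real.exp_neg]
  have hR := (Real.exp_pos (lam*Δ1)).ne'
  have hS := (Real.exp_pos (lam*Δ2)).ne'
  have hP1 : Real.exp (lam*Δ1) * Real.exp (lam*Δ1) - 1 ≠ 0 := by
    have : Real.exp (lam*Δ1) * Real.exp (lam*Δ1) = Real.exp (2*lam*Δ1) := by
      rw [← Real.exp_add]; ring_nf
    rw [this]; exact hg1.ne'
  have hQ1 : Real.exp (lam*Δ2) * Real.exp (lam*Δ2) - 1 ≠ 0 := by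
    have : Real.exp (lam*Δ2) * Real.exp (lam*Δ2) = Real.exp (2*lam*Δ2) := by
      rw [← Real.exp_add]; ring_nf
    rw [this]; exact hg2.ne'
  have hPQ1 : Real.exp (lam*Δ1) * Real.exp (lam*Δ2) * (Real.exp (lam*Δ1) * Real.exp (lam*Δ2)) - 1 ≠ 0 := by
    have : Real.exp (lam*Δ1) * Real.exp (lam*Δ2) * (Real.exp (lam*Δ1) * Real.exp (lam*Δ2)) = Real.exp (2*lam*(Δ1+Δ2)) := by
      rw [← Real.exp_add, ← Real.exp_add]; congr 1; ring
    rw [this]; exact hg12.ne'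
  have hP1' : Real.exp (lam*Δ1) ^ 2 - 1 ≠ 0 := by rw [sq]; exact hP1
  have hQ1' : Real.exp (lam*Δ2) ^ 2 - 1 ≠ 0 := by rw [sq]; exact hQ1
  have hPQ1' : Real.exp (lam*Δ1) ^ 2 * Real.exp (lam*Δ2) ^ 2 - 1 ≠ 0 := by
    rw [sq, sq]; intro h; apply hPQ1; linear_combination h
  field_simp
  ring
end

section
/- Let λ > 0, ν > 0, ρ ∈ ℝ, c > 0 and set κ = 2λ/ν². Let f, g : ℝ → ℝ be twice differentiable functions both satisfying (ν²/2) φ''(x) − λ x φ'(x) = ρ φ(x) for all x, with g(x) > 0 for all x. Define F(x) = c f(x)/g(x) and σ(F(x)) = ν F'(x). Then the diffusion coefficient has the form σ(F(x)) = σ₀ · 𝔰(x)/g(x)² for all x ∈ ℝ, where σ₀ = ν c (g(0)f'(0) − g'(0)f(0)) is a constant and 𝔰(x) = e^{κx²/2} is the scale density of the Ornstein–Uhlenbeck diffusion. -/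
open Real

/-- for two solutions `f, g` (with `g > 0`) of the Ornstein–Uhlenbeck
eigenvalue equation `(ν²/2) φ'' − λx φ' = ρ φ`, the map `F(x) = c f(x)/g(x)` yields the
diffusion coefficient `σ(F(x)) = ν F'(x) = σ₀ 𝔰(x)/g(x)²` with
`σ₀ = ν c (g(0)f'(0) − g'(0)f(0))` and scale density `𝔰(x) = e^{κx²/2}`, `κ = 2λ/ν²`. -/
theorem ou_diffusion_coefficient_form (lam nu ρ c : ℝ) (hlam : 0 < lam) (hnu : 0 < nu)
    (hc : 0 < c) (f f' f'' g g' g'' : ℝ → ℝ)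
    (hf : ∀ x, HasDerivAt f (f' x) x) (hf' : ∀ x, HasDerivAt f' (f'' x) x)
    (hg : ∀ x, HasDerivAt g (g' x) x) (hg' : ∀ x, HasDerivAt g' (g'' x) x)
    (hgpos : ∀ x, 0 < g x)
    (hfode : ∀ x, nu ^ 2 / 2 * f'' x - lam * x * f' x = ρ * f x)
    (hgode : ∀ x, nu ^ 2 / 2 * g'' x - lam * x * g' x = ρ * g x) :
    ∀ x, nu * deriv (fun y => c * f y / g y) x
      = (nu * c * (g 0 * f' 0 - g' 0 * f 0)) *
          Real.exp ((2 * lam / nu ^ 2) * x ^ 2 / 2) / (g x) ^ 2 := by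
  set κ : ℝ := 2 * lam / nu ^ 2 with hκ
  have hnu2 : (nu : ℝ) ^ 2 ≠ 0 := by positivity
  set W : ℝ → ℝ := fun x => g x * f' x - g' x * f x with hWdef
  -- Wronskian derivative
  have hWderiv : ∀ x, HasDerivAt W (κ * x * W x) x := by
    intro x
    have h1 := ((hg x).mul (hf' x)).sub ((hg' x).mul (hf x))
    have key : g' x * f' x + g x * f'' x - (g'' x * f x + g' x * f' x)
        = κ * x * W x := by
      have hf2 := hfode x
      have hg2 := hgode x
      have hmul : nu ^ 2 / 2 *
          (g' x * f' x + g x * f'' x - (g'' x * f x + g' x * f' x))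
          = nu ^ 2 / 2 * (κ * x * W x) := by
        have : nu ^ 2 / 2 * (κ * x * W x) = lam * x * W x := by
          rw [hκ]; field_simp
        rw [this, hWdef]
        linear_combination g x * hf2 - f x * hg2
      exact mul_left_cancel₀ (by positivity) hmul
    rw [← key]; exact h1
  -- W x * exp(-κ x²/2) is constant
  have hE : ∀ x : ℝ, HasDerivAt (fun y : ℝ => Real.exp (-(κ * y ^ 2 / 2)))
      (-(κ * x) * Real.exp (-(κ * x ^ 2 / 2))) x := by
    intro x
    have h1 : HasDerivAt (fun y : ℝ => -(κ * y ^ 2 / 2)) (-(κ * x)) x := by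
      have := ((hasDerivAt_pow 2 x).const_mul κ).div_const 2
      have h2 := this.neg
      exact h2.congr_deriv (by ring)
    simpa [mul_comm] using h1.exp
  have hconst : ∀ x : ℝ, W x * Real.exp (-(κ * x ^ 2 / 2)) = W 0 := by
    intro x
    have hD : ∀ y : ℝ, HasDerivAt (fun z => W z * Real.exp (-(κ * z ^ 2 / 2))) 0 y := by
      intro y
      have := (hWderiv y).mul (hE y)
      exact this.congr_deriv (by ring)
    have h0 : (fun z => W z * Real.exp (-(κ * z ^ 2 / 2))) x
        = (fun z => W z * Real.exp (-(κ * z ^ 2 / 2))) 0 :=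
      is_const_of_deriv_eq_zero (fun z => (hD z).differentiableAt)
        (fun z => (hD z).deriv) x 0
    simpa using h0
  have hWval : ∀ x : ℝ, W x = W 0 * Real.exp (κ * x ^ 2 / 2) := by
    intro x
    have h := hconst x
    rw [← h, mul_assoc, ← Real.exp_add]
    simp
  intro x
  have hgx := (hgpos x).ne'
  have hderiv : HasDerivAt (fun y => c * f y / g y)
      ((c * f' x * g x - c * f x * g' x) / g x ^ 2) x :=
    ((hf x).const_mul c).div (hg x) hgx
  rw [hderiv.deriv]
  have hW := hWval x
  simp only [hWdef] at hW
  have hg2 : (g x) ^ 2 ≠ 0 := pow_ne_zero _ hgx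
  field_simp
  linear_combination hW
end
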